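/- arXiv:2506.22401 — 4 statements merged into one kernel-verified Lean document; each statement's English description precedes it below -/
import Mathlib

section
/- Let softmax : ℝᵈ → Δᵈ be defined by softmax(x)ᵢ = exp(xᵢ) / Σⱼ exp(xⱼ). Then for all x, y ∈ ℝᵈ, ‖softmax(x) − softmax(y)‖₁ ≤ 2‖x − y‖_∞. -/
open Finset

lemma aux_deriv_nonneg (t : ℝ) : 0 ≤ 1 - Real.exp t + t * Real.exp t := by
  rcases le_or_gt 1 t with h | h
  · nlinarith [Real.exp_pos t]
  · have h1 : -t + 1 ≤ Real.exp (-t) := Real.add_one_le_exp (-t)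
    have h2 : Real.exp t * Real.exp (-t) = 1 := by
      rw [← Real.exp_add]; simp
    nlinarith [Real.exp_pos t, mul_le_mul_of_nonneg_left h1 (Real.exp_pos t).le]

lemma aux_ineq (s : ℝ) (hs : 0 ≤ s) : 2 * (Real.exp s - 1) ≤ s * (Real.exp s + 1) := by
  have hmono : MonotoneOn (fun t : ℝ => t * (Real.exp t + 1) - 2 * (Real.exp t - 1))
      (Set.Ici 0) := by
    apply monotoneOn_of_deriv_nonneg (convex_Ici 0)
    · fun_prop
    · fun_prop
    · intro t ht
      have hd : HasDerivAt (fun t : ℝ => t * (Real.exp t + 1) - 2 * (Real.exp t - 1))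
          (1 * (Real.exp t + 1) + t * Real.exp t - 2 * Real.exp t) t := by
        have h1 : HasDerivAt (fun t : ℝ => t * (Real.exp t + 1))
            (1 * (Real.exp t + 1) + t * Real.exp t) t := by
          exact (hasDerivAt_id t).mul ((Real.hasDerivAt_exp t).add_const 1)
        have h2 : HasDerivAt (fun t : ℝ => 2 * (Real.exp t - 1)) (2 * Real.exp t) t := by
          simpa using (((Real.hasDerivAt_exp t).sub_const 1).const_mul 2)
        exact h1.sub h2
      rw [hd.deriv]
      have := aux_deriv_nonneg t
      nlinarith
  have h0 : (0 : ℝ) ∈ Set.Ici (0:ℝ) := Set.mem_Ici.mpr le_rfl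
  have hs' : s ∈ Set.Ici (0:ℝ) := Set.mem_Ici.mpr hs
  have := hmono h0 hs' hs
  simp only [Real.exp_zero] at this
  linarith

lemma exp_diff_le' (u v : ℝ) (h : v ≤ u) :
    Real.exp u - Real.exp v ≤ (Real.exp u + Real.exp v) * (u - v) / 2 := by
  have hs : 0 ≤ u - v := sub_nonneg.mpr h
  have key := aux_ineq (u - v) hs
  have hx : Real.exp u = Real.exp v * Real.exp (u - v) := by
    rw [← Real.exp_add]; ring_nf
  nlinarith [Real.exp_pos v]

lemma exp_diff_abs_le (u v : ℝ) :
    |Real.exp u - Real.exp v| ≤ (Real.exp u + Real.exp v) * |u - v| / 2 := by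
  rcases le_total v u with h | h
  · rw [abs_of_nonneg (sub_nonneg.mpr (Real.exp_le_exp.mpr h)), abs_of_nonneg (sub_nonneg.mpr h)]
    exact exp_diff_le' u v h
  · rw [abs_sub_comm, abs_sub_comm u v,
      abs_of_nonneg (sub_nonneg.mpr (Real.exp_le_exp.mpr h)), abs_of_nonneg (sub_nonneg.mpr h)]
    calc Real.exp v - Real.exp u ≤ (Real.exp v + Real.exp u) * (v - u) / 2 := exp_diff_le' v u h
      _ = (Real.exp u + Real.exp v) * (v - u) / 2 := by ring

/-- The softmax function is 2-Lipschitz from (ℝᵈ, ‖·‖_∞) to (Δᵈ, ‖·‖₁). -/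
theorem stmt_2 (d : ℕ) (hd : 0 < d) (x y : Fin d → ℝ) :
    haveI : Nonempty (Fin d) := Fin.pos_iff_nonempty.mp hd
    ∑ i, |Real.exp (x i) / ∑ j, Real.exp (x j) - Real.exp (y i) / ∑ j, Real.exp (y j)|
      ≤ 2 * (univ.sup' univ_nonempty fun j => |x j - y j|) := by
  haveI : Nonempty (Fin d) := Fin.pos_iff_nonempty.mp hd
  set A := ∑ j, Real.exp (x j) with hA
  set B := ∑ j, Real.exp (y j) with hB
  set M := univ.sup' univ_nonempty (fun j => |x j - y j|) with hM
  have hApos : 0 < A := Finset.sum_pos (fun j _ => Real.exp_pos _) univ_nonempty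
  have hBpos : 0 < B := Finset.sum_pos (fun j _ => Real.exp_pos _) univ_nonempty
  have hMle : ∀ i, |x i - y i| ≤ M := fun i => by rw [hM]; exact le_sup' (fun j => |x j - y j|) (mem_univ i)
  have step2 : ∀ i, |Real.exp (x i) * B - Real.exp (y i) * A|
      ≤ ∑ j, (Real.exp (x i) * Real.exp (y j) + Real.exp (x j) * Real.exp (y i)) * M := by
    intro i
    have hrw : Real.exp (x i) * B - Real.exp (y i) * A
        = ∑ j, (Real.exp (x i) * Real.exp (y j) - Real.exp (x j) * Real.exp (y i)) := by
      rw [hA, hB, Finset.mul_sum, Finset.mul_sum, ← Finset.sum_sub_distrib]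
      congr 1; ext j; ring
    rw [hrw]
    refine (Finset.abs_sum_le_sum_abs _ _).trans (Finset.sum_le_sum fun j _ => ?_)
    rw [← Real.exp_add, ← Real.exp_add]
    have habs : |(x i + y j) - (x j + y i)| ≤ 2 * M := by
      have h1 : (x i + y j) - (x j + y i) = (x i - y i) - (x j - y j) := by ring
      rw [h1]
      calc |(x i - y i) - (x j - y j)| ≤ |x i - y i| + |x j - y j| := abs_sub _ _
        _ ≤ M + M := add_le_add (hMle i) (hMle j)
        _ = 2 * M := by ring
    calc |Real.exp (x i + y j) - Real.exp (x j + y i)|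
        ≤ (Real.exp (x i + y j) + Real.exp (x j + y i)) * |(x i + y j) - (x j + y i)| / 2 :=
          exp_diff_abs_le _ _
      _ ≤ (Real.exp (x i + y j) + Real.exp (x j + y i)) * (2 * M) / 2 := by
          gcongr
      _ = (Real.exp (x i + y j) + Real.exp (x j + y i)) * M := by ring
  have hstep1 : ∀ i, |Real.exp (x i) / A - Real.exp (y i) / B|
      = |Real.exp (x i) * B - Real.exp (y i) * A| / (A * B) := by
    intro i
    rw [div_sub_div _ _ hApos.ne' hBpos.ne', abs_div, abs_of_pos (mul_pos hApos hBpos),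
      mul_comm A (Real.exp (y i))]
  calc ∑ i, |Real.exp (x i) / A - Real.exp (y i) / B|
      = ∑ i, |Real.exp (x i) * B - Real.exp (y i) * A| / (A * B) := by
        exact Finset.sum_congr rfl fun i _ => hstep1 i
    _ ≤ ∑ i, (∑ j, (Real.exp (x i) * Real.exp (y j) + Real.exp (x j) * Real.exp (y i)) * M)
          / (A * B) := by
        refine Finset.sum_le_sum fun i _ => ?_
        gcongr
        exact step2 i
    _ = 2 * M := by
        rw [← Finset.sum_div]
        have hsum : ∑ i, ∑ j, (Real.exp (x i) * Real.exp (y j)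
            + Real.exp (x j) * Real.exp (y i)) * M = 2 * M * (A * B) := by
          simp_rw [add_mul, Finset.sum_add_distrib]
          have h1 : ∑ i : Fin d, ∑ j : Fin d, Real.exp (x i) * Real.exp (y j) * M
              = A * B * M := by
            rw [hA, hB, Finset.sum_mul_sum, Finset.sum_mul]
            refine Finset.sum_congr rfl fun i _ => ?_
            rw [Finset.sum_mul]
          have h2 : ∑ i : Fin d, ∑ j : Fin d, Real.exp (x j) * Real.exp (y i) * M
              = A * B * M := by
            rw [Finset.sum_comm, hA, hB, Finset.sum_mul_sum, Finset.sum_mul]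
            refine Finset.sum_congr rfl fun j _ => ?_
            rw [Finset.sum_mul]
          rw [h1, h2]; ring
        rw [hsum]
        field_simp
end

section
/- Let X ⊆ ℝᵈ with sup_{x∈X} ‖x‖₂ ≤ B. Then for any n ∈ ℕ₊ and any λ > 0 and any x₁,…,xₙ ∈ X, log det(I_d + (1/λ) Σ_{i=1}^{n} xᵢxᵢᵀ) ≤ d log(1 + nB²/(dλ)). -/
open Finset Matrix

/-- Information gain bound: if ‖xᵢ‖₂ ≤ B then
log det(I_d + (1/λ) Σᵢ xᵢxᵢᵀ) ≤ d log(1 + nB²/(dλ)). -/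
theorem stmt_5 (d n : ℕ) (hd : 0 < d) (hn : 0 < n) (B lam : ℝ) (hlam : 0 < lam)
    (x : Fin n → Fin d → ℝ)
    (hx : ∀ i, Real.sqrt (∑ j, (x i j) ^ 2) ≤ B) :
    Real.log ((1 + (1 / lam) • ∑ i, vecMulVec (x i) (x i) : Matrix (Fin d) (Fin d) ℝ).det)
      ≤ d * Real.log (1 + n * B ^ 2 / (d * lam)) := by
  set S : Matrix (Fin d) (Fin d) ℝ := (1 / lam) • ∑ i, vecMulVec (x i) (x i) with hSdef
  set M : Matrix (Fin d) (Fin d) ℝ := 1 + S with hMdef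
  have hS : S.PosSemidef := by
    have hA : S = (Matrix.of fun i j => x i j / Real.sqrt lam : Matrix (Fin n) (Fin d) ℝ)ᴴ *
        (Matrix.of fun i j => x i j / Real.sqrt lam) := by
      ext j k
      simp only [hSdef, Matrix.smul_apply, Matrix.sum_apply, Matrix.vecMulVec_apply,
        Matrix.mul_apply, Matrix.conjTranspose_apply, Matrix.of_apply, star_trivial,
        smul_eq_mul, Finset.mul_sum]
      refine Finset.sum_congr rfl fun i _ => ?_
      rw [div_mul_div_comm, Real.mul_self_sqrt hlam.le]
      ring
    rw [hA]; exact Matrix.posSemidef_conjTranspose_mul_self _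
  have hM : M.PosDef := Matrix.PosDef.one.add_posSemidef hS
  have hH : M.IsHermitian := hM.isHermitian
  set ev : Fin d → ℝ := hH.eigenvalues with hevdef
  have hevpos : ∀ i, 0 < ev i := hM.eigenvalues_pos
  have hdet : M.det = ∏ i, ev i := by simpa using hH.det_eq_prod_eigenvalues
  have htr : M.trace = ∑ i, ev i := by
    nth_rewrite 1 [hH.spectral_theorem]
    rw [Unitary.conjStarAlgAut_apply, Matrix.trace_mul_comm, ← mul_assoc,
      (Matrix.mem_unitaryGroup_iff').mp (hH.eigenvectorUnitary).2, one_mul,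
      Matrix.trace_diagonal]
    simp
    rfl
  have htr2 : M.trace = d + (1 / lam) * ∑ i, ∑ j, (x i j) ^ 2 := by
    simp only [hMdef, hSdef, Matrix.trace, Matrix.diag, Matrix.add_apply, Matrix.one_apply_eq,
      Matrix.smul_apply, Matrix.sum_apply, Matrix.vecMulVec_apply, smul_eq_mul,
      Finset.sum_add_distrib, Finset.sum_const, Finset.card_univ, Fintype.card_fin,
      nsmul_eq_mul, mul_one, ← Finset.mul_sum]
    rw [Finset.sum_comm]
    simp [sq]
  have hB2 : ∀ i, ∑ j, (x i j) ^ 2 ≤ B ^ 2 := by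
    intro i
    have h0 : (0:ℝ) ≤ ∑ j, (x i j) ^ 2 := by positivity
    nlinarith [hx i, Real.sq_sqrt h0, Real.sqrt_nonneg (∑ j, (x i j) ^ 2)]
  have hStot : ∑ i, ∑ j, (x i j) ^ 2 ≤ n * B ^ 2 := by
    calc ∑ i : Fin n, ∑ j, (x i j) ^ 2 ≤ ∑ _i : Fin n, B ^ 2 :=
          Finset.sum_le_sum fun i _ => hB2 i
      _ = n * B ^ 2 := by simp [mul_comm]
  have hd' : (0:ℝ) < d := by exact_mod_cast hd
  have hjen : ∑ i, (1 / (d:ℝ)) • Real.log (ev i) ≤ Real.log (∑ i, (1 / (d:ℝ)) • ev i) :=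
    (strictConcaveOn_log_Ioi.concaveOn).le_map_sum (fun i _ => by positivity)
      (by simp; field_simp) (fun i _ => hevpos i)
  have havg : ∑ i, (1 / (d:ℝ)) • ev i = 1 + (∑ i, ∑ j, (x i j) ^ 2) / (d * lam) := by
    simp only [smul_eq_mul, ← Finset.mul_sum, ← htr, htr2]
    field_simp
    try ring
  have hpos : (0:ℝ) < 1 + (∑ i, ∑ j, (x i j) ^ 2) / (d * lam) := by positivity
  have hle : 1 + (∑ i, ∑ j, (x i j) ^ 2) / (d * lam) ≤ 1 + n * B ^ 2 / (d * lam) := by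
    gcongr
  calc Real.log M.det = ∑ i, Real.log (ev i) := by
        rw [hdet, Real.log_prod fun i _ => (hevpos i).ne']
    _ = d * ∑ i, (1 / (d:ℝ)) • Real.log (ev i) := by
        simp only [smul_eq_mul, ← Finset.mul_sum]; field_simp
    _ ≤ d * Real.log (∑ i, (1 / (d:ℝ)) • ev i) := by
        exact mul_le_mul_of_nonneg_left hjen hd'.le
    _ = d * Real.log (1 + (∑ i, ∑ j, (x i j) ^ 2) / (d * lam)) := by rw [havg]
    _ ≤ d * Real.log (1 + n * B ^ 2 / (d * lam)) := by
        exact mul_le_mul_of_nonneg_left (Real.log_le_log hpos hle) hd'.le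
end

section
/- Let A be a finite action set, Q : A → ℝ a function, and B > 0. The softmax policy π(a) = exp(B·Q(a)) / Σ_{a'} exp(B·Q(a')) satisfies Σ_a π(a) Q(a) ≥ max_a Q(a) − (log |A|)/B. -/
open Finset

/-- The softmax policy at inverse temperature B is nearly greedy:
Σ_a π(a) Q(a) ≥ max_a Q(a) − log|A| / B. -/
theorem stmt_8 {A : Type*} [Fintype A] [Nonempty A] (Q : A → ℝ) (B : ℝ) (hB : 0 < B) :
    (univ.sup' univ_nonempty fun a => Q a) - Real.log (Fintype.card A) / B
      ≤ ∑ a, (Real.exp (B * Q a) / ∑ a', Real.exp (B * Q a')) * Q a := by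
  set S : ℝ := ∑ a', Real.exp (B * Q a') with hS
  have hSpos : 0 < S := Finset.sum_pos (fun a _ => Real.exp_pos _) univ_nonempty
  set π : A → ℝ := fun a => Real.exp (B * Q a) / S with hπ
  have hπpos : ∀ a, 0 < π a := fun a => div_pos (Real.exp_pos _) hSpos
  have hπsum : ∑ a, π a = 1 := by
    rw [hπ, ← Finset.sum_div]
    exact div_self (ne_of_gt hSpos)
  have ncard : (0:ℝ) < (Fintype.card A : ℝ) := by exact_mod_cast Fintype.card_pos
  set n : ℝ := (Fintype.card A : ℝ) with hn
  -- entropy bound: ∑ π log π ≥ -log n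
  have hent : -Real.log n ≤ ∑ a, π a * Real.log (π a) := by
    have h1 : ∀ a : A, π a * (-Real.log n - Real.log (π a)) ≤ 1/n - π a := by
      intro a
      have hx : (0:ℝ) < 1 / (n * π a) := by positivity
      have hl := Real.log_le_sub_one_of_pos hx
      rw [Real.log_div one_ne_zero (by positivity), Real.log_one,
        Real.log_mul (ne_of_gt ncard) (ne_of_gt (hπpos a))] at hl
      have h2 : -Real.log n - Real.log (π a) ≤ 1/(n * π a) - 1 := by linarith
      have h3 := mul_le_mul_of_nonneg_left h2 (le_of_lt (hπpos a))
      calc π a * (-Real.log n - Real.log (π a))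
          ≤ π a * (1/(n * π a) - 1) := h3
        _ = 1/n - π a := by
            field_simp
            rw [mul_sub, mul_one_div_cancel (hπpos a).ne']
    have hsum := Finset.sum_le_sum (s := univ) (fun a _ => h1 a)
    have e1 : ∑ a, π a * (-Real.log n - Real.log (π a))
        = -Real.log n - ∑ a, π a * Real.log (π a) := by
      rw [Finset.sum_congr rfl (fun a _ => mul_sub (π a) (-Real.log n) (Real.log (π a))),
        Finset.sum_sub_distrib, ← Finset.sum_mul, hπsum, one_mul]
    have e2 : ∑ a : A, (1/n - π a) = 0 := by
      rw [Finset.sum_sub_distrib, hπsum, Finset.sum_const, Finset.card_univ]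
      rw [nsmul_eq_mul, ← hn, mul_one_div_cancel ncard.ne', sub_self]
    rw [e1, e2] at hsum
    linarith
  -- log S ≥ B * max
  obtain ⟨a₀, _, ha₀⟩ := Finset.exists_mem_eq_sup' univ_nonempty fun a => Q a
  have hle : Real.exp (B * Q a₀) ≤ S :=
    Finset.single_le_sum (f := fun a => Real.exp (B * Q a)) (fun a _ => (Real.exp_pos _).le) (mem_univ a₀)
  have hlogS : B * Q a₀ ≤ Real.log S := by
    rw [← Real.log_exp (B * Q a₀)]
    exact Real.log_le_log (Real.exp_pos _) hle
  -- key identity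
  have hlogπ : ∀ a, Real.log (π a) = B * Q a - Real.log S := by
    intro a
    rw [hπ]
    simp only
    rw [Real.log_div (Real.exp_ne_zero _) (ne_of_gt hSpos), Real.log_exp]
  have hkey : ∑ a, π a * (B * Q a) = (∑ a, π a * Real.log (π a)) + Real.log S := by
    have : ∀ a : A, π a * (B * Q a) = π a * Real.log (π a) + π a * Real.log S := by
      intro a; rw [hlogπ a]; ring
    rw [Finset.sum_congr rfl (fun a _ => this a), Finset.sum_add_distrib,
      ← Finset.sum_mul, hπsum, one_mul]
  have hBT : ∑ a, π a * (B * Q a) = B * ∑ a, π a * Q a := by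
    rw [Finset.mul_sum]; exact Finset.sum_congr rfl (fun a _ => by ring)
  set M : ℝ := univ.sup' univ_nonempty fun a => Q a with hM
  set T : ℝ := ∑ a, π a * Q a with hT
  have hmain : B * M - Real.log n ≤ B * T := by
    rw [← hBT, hkey, ha₀] at *
    linarith
  have hgoal : B * (M - Real.log n / B) ≤ B * T := by
    rw [mul_sub, mul_div_cancel₀ _ hB.ne']
    linarith
  exact le_of_mul_le_mul_left hgoal hB
end

section
/- Let {X_t}_{t≤T} be a real-valued martingale difference sequence adapted to a filtration {F_t}, with |X_t| ≤ R almost surely. Then for any η ∈ (0, 1/R) and δ ∈ (0,1), with probability at least 1 − δ, Σ_{t=1}^{T} X_t ≤ C·(η·Σ_{t=1}^{T} E[X_t² | F_{t-1}] + log(1/δ)/η) for an absolute constant C. -/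
open MeasureTheory Finset

theorem aux_exp_le {x : ℝ} (hx : |x| ≤ 1) : Real.exp x ≤ 1 + x + x ^ 2 := by
  have h := Real.exp_bound hx (n := 2) (by norm_num)
  have h2 : ∑ m ∈ range 2, x ^ m / m.factorial = 1 + x := by
    simp [Finset.sum_range_succ]
  rw [h2] at h
  have h4 := (abs_sub_le_iff.1 h).1
  have h5 : ((Nat.succ 2 : ℕ) : ℝ) / (((Nat.factorial 2 : ℕ) : ℝ) * (2:ℕ)) = 3/4 := by
    norm_num [Nat.factorial]
  rw [h5] at h4
  nlinarith [sq_abs x, sq_nonneg x]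

/-- Freedman's inequality: there is an absolute constant C such that for any bounded
martingale difference sequence {X_t} (|X_t| ≤ R a.s., E[X_t | F_{t-1}] = 0) and any
η ∈ (0, 1/R), δ ∈ (0,1), with probability at least 1 − δ,
Σ_{t=1}^T X_t ≤ C (η Σ_{t=1}^T E[X_t² | F_{t-1}] + log(1/δ)/η). -/
theorem stmt_15 :
    ∃ C : ℝ, 0 < C ∧
      ∀ (Ω : Type) (m : MeasurableSpace Ω) (P : Measure Ω),
        IsProbabilityMeasure P →
        ∀ (ℱ : Filtration ℕ m) (X : ℕ → Ω → ℝ) (T : ℕ) (R : ℝ),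
          0 < R →
          Adapted ℱ X →
          (∀ t, P[X t | ℱ (t - 1)] =ᵐ[P] 0) →
          (∀ t, ∀ᵐ ω ∂P, |X t ω| ≤ R) →
          ∀ η δ : ℝ, η ∈ Set.Ioo 0 (1 / R) → δ ∈ Set.Ioo (0 : ℝ) 1 →
            ENNReal.ofReal (1 - δ) ≤
              P {ω | ∑ t ∈ Icc 1 T, X t ω ≤
                C * (η * ∑ t ∈ Icc 1 T, (P[fun ω' => (X t ω') ^ 2 | ℱ (t - 1)]) ω +
                  Real.log (1 / δ) / η)} := by
  refine ⟨1, one_pos, ?_⟩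
  intro Ω m P hP ℱ X T R hR hadap hmds hbd η δ hη hδ
  obtain ⟨hη0, hηR⟩ := hη
  obtain ⟨hδ0, hδ1⟩ := hδ
  have hηR1 : η * R ≤ 1 := by
    rw [lt_div_iff₀ hR] at hηR; linarith
  -- notation
  set c : ℕ → Ω → ℝ := fun t => P[fun ω' => (X t ω') ^ 2 | ℱ (t - 1)] with hc
  set S : ℕ → Ω → ℝ := fun n ω => ∑ t ∈ Icc 1 n, X t ω with hS
  set V : ℕ → Ω → ℝ := fun n ω => ∑ t ∈ Icc 1 n, c t ω with hV
  set W : ℕ → Ω → ℝ := fun n ω => Real.exp (η * S n ω - η ^ 2 * V n ω) with hW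
  -- basic measurability and integrability
  have hXm : ∀ t, StronglyMeasurable[m] (X t) := fun t => ((hadap t).mono (ℱ.le t) le_rfl).stronglyMeasurable
  have hXint : ∀ t, Integrable (X t) P := fun t =>
    Integrable.mono' (integrable_const R) (hXm t).aestronglyMeasurable (hbd t)
  have hX2int : ∀ t, Integrable (fun ω => X t ω ^ 2) P := fun t => by
    refine Integrable.mono' (integrable_const (R ^ 2))
      ((hXm t).pow 2).aestronglyMeasurable ?_
    filter_upwards [hbd t] with ω hω
    rw [Real.norm_eq_abs, abs_pow]
    exact pow_le_pow_left₀ (abs_nonneg _) hω 2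
  have hcm : ∀ t, StronglyMeasurable[ℱ (t - 1)] (c t) := fun t => stronglyMeasurable_condExp
  have hc0 : ∀ t, 0 ≤ᵐ[P] c t := fun t =>
    condExp_nonneg (ae_of_all _ fun ω => sq_nonneg (X t ω))
  have hSm : ∀ n, StronglyMeasurable[ℱ n] (S n) := fun n => by
    apply Finset.stronglyMeasurable_fun_sum
    intro t ht
    exact ((hadap t).mono (ℱ.mono (mem_Icc.1 ht).2) le_rfl).stronglyMeasurable
  have hVm : ∀ n, 1 ≤ n → StronglyMeasurable[ℱ (n - 1)] (V n) := fun n hn => by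
    apply Finset.stronglyMeasurable_fun_sum
    intro t ht
    have ht' := mem_Icc.1 ht
    exact (hcm t).mono (ℱ.mono (by omega : t - 1 ≤ n - 1))
  have hcm' : ∀ t, StronglyMeasurable[m] (c t) := fun t => (hcm t).mono (ℱ.le _)
  have hWm : ∀ n, StronglyMeasurable[m] (W n) := fun n => by
    refine Real.continuous_exp.comp_stronglyMeasurable ?_
    refine StronglyMeasurable.sub (((hSm n).mono (ℱ.le n)).const_mul η) ?_
    exact (Finset.stronglyMeasurable_fun_sum _ fun t _ => hcm' t).const_mul _
  have hV0 : ∀ n, ∀ᵐ ω ∂P, 0 ≤ V n ω := fun n => by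
    have := (ae_all_iff).2 hc0
    filter_upwards [this] with ω hω
    exact Finset.sum_nonneg fun t _ => hω t
  have hSbd : ∀ n, ∀ᵐ ω ∂P, |S n ω| ≤ n * R := fun n => by
    filter_upwards [(ae_all_iff).2 hbd] with ω hω
    calc |∑ t ∈ Icc 1 n, X t ω| ≤ ∑ t ∈ Icc 1 n, |X t ω| := Finset.abs_sum_le_sum_abs _ _
    _ ≤ ∑ t ∈ Icc 1 n, R := Finset.sum_le_sum fun t _ => hω t
    _ = n * R := by
        rw [Finset.sum_const, Nat.card_Icc, Nat.add_sub_cancel, nsmul_eq_mul]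
  have hWbd : ∀ n, ∀ᵐ ω ∂P, ‖W n ω‖ ≤ Real.exp (η * (n * R)) := fun n => by
    filter_upwards [hV0 n, hSbd n] with ω h1 h2
    rw [Real.norm_eq_abs, abs_of_pos (Real.exp_pos _), Real.exp_le_exp]
    have : S n ω ≤ n * R := (abs_le.1 h2).2
    nlinarith
  have hWint : ∀ n, Integrable (W n) P := fun n =>
    Integrable.mono' (integrable_const _) (hWm n).aestronglyMeasurable (hWbd n)
  -- key induction
  have hkey : ∀ n, ∫ ω, W n ω ∂P ≤ 1 := by
    intro n
    induction n with
    | zero => simp [hW, hS, hV]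
    | succ n ih =>
      have hle : (ℱ n : MeasurableSpace Ω) ≤ m := ℱ.le n
      have hSsucc : ∀ ω, S (n + 1) ω = S n ω + X (n + 1) ω := fun ω =>
        Finset.sum_Icc_succ_top (Nat.le_add_left 1 n) _
      have hVsucc : ∀ ω, V (n + 1) ω = V n ω + c (n + 1) ω := fun ω =>
        Finset.sum_Icc_succ_top (Nat.le_add_left 1 n) _
      set G : Ω → ℝ := fun ω => Real.exp (η * S n ω - η ^ 2 * V (n + 1) ω) with hG
      set E : Ω → ℝ := fun ω => Real.exp (η * X (n + 1) ω) with hE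
      have hWGE : W (n + 1) = G * E := by
        funext ω
        simp only [Pi.mul_apply, hW, hG, hE, ← Real.exp_add, hSsucc ω]
        ring_nf
      have hGm : StronglyMeasurable[ℱ n] G := by
        refine Real.continuous_exp.comp_stronglyMeasurable ?_
        refine StronglyMeasurable.sub ((hSm n).const_mul η) ?_
        exact (hVm (n + 1) (Nat.le_add_left 1 n)).const_mul _
      have hEint : Integrable E P := by
        refine Integrable.mono' (integrable_const (Real.exp (η * R)))
          (Real.continuous_exp.comp_stronglyMeasurable
            ((((hadap (n + 1)).mono (ℱ.le _) le_rfl).stronglyMeasurable).const_mul η)).aestronglyMeasurable ?_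
        filter_upwards [hbd (n + 1)] with ω hω
        rw [Real.norm_eq_abs, abs_of_pos (Real.exp_pos _), Real.exp_le_exp]
        have := (abs_le.1 hω).2
        nlinarith
      have hGEint : Integrable (G * E) P := hWGE ▸ hWint (n + 1)
      have step1 : P[G * E | ℱ n] =ᵐ[P] G * P[E | ℱ n] :=
        condExp_mul_of_stronglyMeasurable_left hGm hGEint hEint
      -- bound the conditional mgf
      have hptwise : E ≤ᵐ[P]
          (fun _ => (1 : ℝ)) + η • X (n + 1) + η ^ 2 • fun ω => X (n + 1) ω ^ 2 := by
        filter_upwards [hbd (n + 1)] with ω hω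
        have h1 : |η * X (n + 1) ω| ≤ 1 := by
          rw [abs_mul, abs_of_pos hη0]
          nlinarith [abs_nonneg (X (n + 1) ω)]
        have h2 := aux_exp_le h1
        simp only [Pi.add_apply, Pi.smul_apply, smul_eq_mul, hE]
        nlinarith [sq_nonneg (X (n + 1) ω)]
      have hXsint : Integrable (η • X (n + 1)) P := (hXint (n + 1)).smul η
      have hX2sint : Integrable (η ^ 2 • fun ω => X (n + 1) ω ^ 2) P :=
        (hX2int (n + 1)).smul (η ^ 2)
      have hmono := condExp_mono (m := ℱ n) hEint
        (((integrable_const 1).add hXsint).add hX2sint) hptwise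
      have hadd1 := condExp_add (m := ℱ n) (μ := P)
        ((integrable_const (1 : ℝ)).add hXsint) hX2sint
      have hadd2 := condExp_add (m := ℱ n) (μ := P) (integrable_const (1 : ℝ)) hXsint
      have hsm1 := condExp_smul (m := ℱ n) (μ := P) η (X (n + 1))
      have hsm2 := condExp_smul (m := ℱ n) (μ := P) (η ^ 2) (fun ω => X (n + 1) ω ^ 2)
      have hconst : P[(fun _ => (1 : ℝ)) | ℱ n] = fun _ => (1 : ℝ) := condExp_const hle 1
      have hX0 : P[X (n + 1) | ℱ n] =ᵐ[P] 0 := hmds (n + 1)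
      have step2 : P[E | ℱ n] ≤ᵐ[P] fun ω => 1 + η ^ 2 * c (n + 1) ω := by
        filter_upwards [hmono, hadd1, hadd2, hsm1, hsm2, hX0] with ω h h1 h2 h3 h4 h5
        have hcval : (P[fun ω' => X (n + 1) ω' ^ 2 | ℱ n]) ω = c (n + 1) ω := rfl
        calc (P[E | ℱ n]) ω ≤ _ := h
        _ = 1 + η * (P[X (n + 1) | ℱ n]) ω + η ^ 2 * c (n + 1) ω := by
            rw [h1, Pi.add_apply, h2, Pi.add_apply, hconst, h3, h4]
            simp [hcval]
        _ = 1 + η ^ 2 * c (n + 1) ω := by rw [h5]; simp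
      have step3 : P[G * E | ℱ n] ≤ᵐ[P] W n := by
        filter_upwards [step1, step2, hc0 (n + 1)] with ω h1 h2 h3
        rw [h1, Pi.mul_apply]
        have hG0 : 0 ≤ G ω := (Real.exp_pos _).le
        calc G ω * (P[E | ℱ n]) ω ≤ G ω * (1 + η ^ 2 * c (n + 1) ω) :=
              mul_le_mul_of_nonneg_left h2 hG0
        _ ≤ G ω * Real.exp (η ^ 2 * c (n + 1) ω) :=
              mul_le_mul_of_nonneg_left (by
                have := Real.add_one_le_exp (η ^ 2 * c (n + 1) ω); linarith) hG0
        _ = W n ω := by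
              rw [hG, hW, ← Real.exp_add, hVsucc ω]; ring_nf
      calc ∫ ω, W (n + 1) ω ∂P = ∫ ω, (G * E) ω ∂P := by rw [hWGE]
      _ = ∫ ω, (P[G * E | ℱ n]) ω ∂P := (integral_condExp hle).symm
      _ ≤ ∫ ω, W n ω ∂P := integral_mono_ae integrable_condExp (hWint n) step3
      _ ≤ 1 := ih
  -- Markov + conclusion
  have hmark := mul_meas_ge_le_integral_of_nonneg
    (ae_of_all _ fun ω => (Real.exp_pos _).le) (hWint T) (1 / δ)
  have hAtoReal : (P {ω | 1 / δ ≤ W T ω}).toReal ≤ δ := by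
    have h1 : (1 / δ) * (P {ω | 1 / δ ≤ W T ω}).toReal ≤ 1 := hmark.trans (hkey T)
    rw [div_mul_eq_mul_div, one_mul, div_le_one hδ0] at h1
    exact h1
  have hA : P {ω | 1 / δ ≤ W T ω} ≤ ENNReal.ofReal δ := by
    rw [← ENNReal.ofReal_toReal (measure_ne_top P _)]
    exact ENNReal.ofReal_le_ofReal hAtoReal
  have hAm : MeasurableSet {ω | 1 / δ ≤ W T ω} :=
    measurableSet_le measurable_const (hWm T).measurable
  have hsub : {ω | 1 / δ ≤ W T ω}ᶜ ⊆
      {ω | ∑ t ∈ Icc 1 T, X t ω ≤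
        1 * (η * ∑ t ∈ Icc 1 T, (P[fun ω' => (X t ω') ^ 2 | ℱ (t - 1)]) ω +
          Real.log (1 / δ) / η)} := by
    intro ω hω
    simp only [Set.mem_compl_iff, Set.mem_setOf_eq, not_le] at hω
    have h2 : η * S T ω - η ^ 2 * V T ω < Real.log (1 / δ) :=
      (Real.lt_log_iff_exp_lt (by positivity)).2 hω
    have h3 : Real.log (1 / δ) / η * η = Real.log (1 / δ) :=
      div_mul_cancel₀ _ (ne_of_gt hη0)
    show S T ω ≤ 1 * (η * V T ω + Real.log (1 / δ) / η)
    nlinarith [h2, h3, hη0]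
  calc ENNReal.ofReal (1 - δ) = 1 - ENNReal.ofReal δ := by
        rw [ENNReal.ofReal_sub 1 hδ0.le, ENNReal.ofReal_one]
  _ ≤ 1 - P {ω | 1 / δ ≤ W T ω} := tsub_le_tsub_left hA 1
  _ = P {ω | 1 / δ ≤ W T ω}ᶜ := (prob_compl_eq_one_sub hAm).symm
  _ ≤ _ := measure_mono hsub
end
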